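/- For any positive integer n, the least common multiple of the numbers C(n,k)·k for k = 1, ..., n equals lcm(1, 2, ..., n). -/

import Mathlib

open Nat Finset

lemma key_bound {p n k : ℕ} (hp : p.Prime) (hk0 : k ≠ 0) (hkn : k ≤ n) :
    (n.choose k * k).factorization p ≤ Nat.log p n := by
  have hn0 : n ≠ 0 := by omega
  set L := Nat.log p n with hL
  set S : Finset ℕ := {i ∈ Ico 1 (L + 1) | p ^ i ≤ k % p ^ i + (n - k) % p ^ i} with hS
  set T : Finset ℕ := {i ∈ Ico 1 (L + 1) | p ^ i ∣ k} with hT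
  have hdisj : Disjoint S T := by
    simp +contextual [hS, hT, Finset.disjoint_right, Nat.dvd_iff_mod_eq_zero,
      Nat.mod_lt _ (pow_pos hp.pos _)]
  have h1 : emultiplicity p (n.choose k) = #S :=
    Nat.Prime.emultiplicity_choose hp hkn (Nat.lt_succ_self _)
  have h2 : emultiplicity p k = #T :=
    Nat.emultiplicity_eq_card_pow_dvd hp.ne_one hk0.bot_lt
      (Nat.lt_succ_of_le (Nat.log_mono_right hkn))
  have hmul : emultiplicity p (n.choose k * k) = (#S + #T : ℕ) := by
    rw [Nat.Prime.emultiplicity_mul hp, h1, h2, Nat.cast_add]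
  have hcard : #S + #T ≤ L := by
    rw [← card_union_of_disjoint hdisj]
    calc #(S ∪ T) ≤ #(Ico 1 (L + 1)) := by
          apply card_le_card
          intro x hx
          rcases Finset.mem_union.1 hx with h | h
          · exact (Finset.mem_filter.1 h).1
          · exact (Finset.mem_filter.1 h).1
      _ = L := by rw [Nat.card_Ico]; omega
  have hne : n.choose k * k ≠ 0 :=
    Nat.mul_ne_zero (Nat.choose_pos hkn).ne' hk0
  have : (emultiplicity p (n.choose k * k)) ≤ (L : ℕ∞) := by
    rw [hmul]; exact_mod_cast hcard
  have hfd : n.choose k * k ≠ 0 := hne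
  rw [Nat.factorization_def _ hp]
  have := (padicValNat_eq_emultiplicity (p := p) (hp := ⟨hp⟩) hfd).symm ▸ this
  exact_mod_cast this

theorem lcm_choose_mul_eq_lcm (n : ℕ) (hn : 0 < n) :
    (Finset.Icc 1 n).lcm (fun k => n.choose k * k) = (Finset.Icc 1 n).lcm id := by
  have hterm : ∀ k ∈ Finset.Icc 1 n, n.choose k * k ≠ 0 := by
    intro k hk
    rw [Finset.mem_Icc] at hk
    exact Nat.mul_ne_zero (Nat.choose_pos hk.2).ne' (by omega)
  have hL0 : (Finset.Icc 1 n).lcm (fun k => n.choose k * k) ≠ 0 := by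
    rw [Ne, Finset.lcm_eq_zero_iff]
    rintro ⟨k, hk, h0⟩
    exact hterm k (by simpa using hk) (by simpa using h0.symm)
  have hR0 : (Finset.Icc 1 n).lcm id ≠ 0 := by
    rw [Ne, Finset.lcm_eq_zero_iff]
    rintro ⟨k, hk, h0⟩
    simp only [Finset.coe_Icc, Set.mem_Icc, Finset.mem_Icc] at hk
    simp only [id] at h0
    omega
  apply Nat.dvd_antisymm
  · -- each choose n k * k divides lcm (Icc 1 n) id
    apply Finset.lcm_dvd
    intro k hk
    rw [Finset.mem_Icc] at hk
    rw [← Nat.factorization_le_iff_dvd (Nat.mul_ne_zero (Nat.choose_pos hk.2).ne'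
        (by omega)) hR0]
    intro p
    by_cases hp : p.Prime
    · refine le_trans (key_bound hp (by omega) hk.2) ?_
      rw [← Nat.Prime.pow_dvd_iff_le_factorization hp hR0]
      have hmem : p ^ Nat.log p n ∈ Finset.Icc 1 n := by
        rw [Finset.mem_Icc]
        exact ⟨Nat.one_le_iff_ne_zero.2 (pow_ne_zero _ hp.pos.ne'),
          Nat.pow_log_le_self p hn.ne'⟩
      exact Finset.dvd_lcm hmem
    · simp [Nat.factorization_eq_zero_of_not_prime _ hp]
  · apply Finset.lcm_dvd
    intro m hm
    rw [Finset.mem_Icc] at hm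
    simp only [id]
    rw [← Nat.factorization_le_iff_dvd (by omega : m ≠ 0) hL0]
    intro p
    by_cases hp : p.Prime
    · set a := m.factorization p with ha
      rw [← Nat.Prime.pow_dvd_iff_le_factorization hp hL0]
      have hpa : p ^ a ∣ m := Nat.ordProj_dvd m p
      have hpan : p ^ a ≤ n := le_trans (Nat.le_of_dvd (by omega) hpa) hm.2
      have hmem : p ^ a ∈ Finset.Icc 1 n := by
        rw [Finset.mem_Icc]
        exact ⟨Nat.one_le_iff_ne_zero.2 (pow_ne_zero _ hp.pos.ne'), hpan⟩
      have h1 : p ^ a ∣ n.choose (p ^ a) * p ^ a := dvd_mul_left _ _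
      exact h1.trans (Finset.dvd_lcm hmem)
    · simp [Nat.factorization_eq_zero_of_not_prime _ hp]
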